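/- Fix d, M, T ≥ 1 and 1 ≤ t ≤ T. On a probability space, let {(x_{s,i}, y_{s,i}) : 1 ≤ s ≤ T, 1 ≤ i ≤ M} and the query input x_{t,q} be mutually independent, where for each s the pairs (x_{s,i}, y_{s,i}) are i.i.d. ℝ^d × ℝ-valued with finite second moments of x_{s,i}y_{s,i}, mean μ_s = E[x_{s,i} y_{s,i}] and covariance Σ_s = Var(x_{s,i} y_{s,i}), and x_{t,q} satisfies E[x_{t,q}] = 0 and E[x_{t,q} x_{t,q}^T] = Λ. Set S_s = Σ_{i=1}^M x_{s,i} y_{s,i}, ŷ_{t,q} = x_{t,q}^T Γ^{−1} ((1/(t(M+1))) Σ_{s=1}^t S_s), Ŷ_{t,q} = x_{t,q}^T Γ^{−1} ((1/(T(M+1)+1)) Σ_{s=1}^T S_s), c_t = −((T−t)M + (T+1−t))/(t(M+1)(T(M+1)+1)), d = 1/(T(M+1)+1), and α_i(t) = c_t if i ≤ t and α_i(t) = d if i > t. Then E[(Ŷ_{t,q} − ŷ_{t,q})^2] = Σ_{i=1}^T α_i(t)^2 · tr( (M Σ_i + M^2 μ_i μ_i^T) Γ^{−2} Λ ) + M^2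 Σ_{i≠j, 1≤i,j≤T} α_i(t) α_j(t) · tr( μ_i μ_j^T Γ^{−2} Λ ). -/

import Mathlib

open MeasureTheory ProbabilityTheory Matrix BigOperators

lemma l2_mul_integrable {Ω : Type*} [MeasurableSpace Ω] {P : Measure Ω} {f g : Ω → ℝ}
    (hf : MemLp f 2 P) (hg : MemLp g 2 P) : Integrable (fun ω => f ω * g ω) P := by
  have h1 := (hf.add hg).integrable_sq
  have h2 := hf.integrable_sq
  have h3 := hg.integrable_sq
  have h4 := (((h1.sub h2).sub h3).div_const 2)
  refine h4.congr (Filter.Eventually.of_forall fun ω => ?_)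
  simp only [Pi.sub_apply, Pi.add_apply]
  ring

lemma sum_swap4 {α β γ δ : Type*} [Fintype α] [Fintype β] [Fintype γ] [Fintype δ]
    {M : Type*} [AddCommMonoid M] (f : α → β → γ → δ → M) :
    ∑ a, ∑ b, ∑ c, ∑ e, f a b c e = ∑ c, ∑ e, ∑ a, ∑ b, f a b c e := by
  have h1 : ∀ a, ∑ b, ∑ c, ∑ e, f a b c e = ∑ c, ∑ e, ∑ b, f a b c e := by
    intro a
    rw [Finset.sum_comm]
    exact Finset.sum_congr rfl fun c _ => Finset.sum_comm
  simp_rw [h1]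
  rw [Finset.sum_comm]
  exact Finset.sum_congr rfl fun c _ => Finset.sum_comm

lemma trace_form {n : Type*} [Fintype n] [DecidableEq n] (A L C : Matrix n n ℝ)
    (hLsym : L.IsSymm) (hAsym : Aᵀ = A) (hcomm : A * L = L * A) :
    ∑ k, ∑ l, ∑ k', ∑ l', A k l * A k' l' * (L k k' * C l l') = (C * (A * A) * L).trace := by
  have hAAL : A * A * L = Aᵀ * L * A := by
    rw [hAsym, Matrix.mul_assoc, hcomm, ← Matrix.mul_assoc, hcomm]
  rw [show C * (A * A) * L = C * (Aᵀ * L * A) from by rw [Matrix.mul_assoc, hAAL]]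
  have hR : (C * (Aᵀ * L * A)).trace
      = ∑ l, ∑ l', ∑ k', ∑ k, C l l' * (A k l' * (L k k' * A k' l)) := by
    simp only [Matrix.trace, Matrix.diag, Matrix.mul_apply, Matrix.transpose_apply,
      Finset.mul_sum, Finset.sum_mul]
    refine Finset.sum_congr rfl fun l _ => ?_
    refine Finset.sum_congr rfl fun l' _ => ?_
    refine Finset.sum_congr rfl fun k' _ => ?_
    refine Finset.sum_congr rfl fun k _ => ?_
    ring
  rw [hR]
  rw [show (∑ k, ∑ l, ∑ k', ∑ l', A k l * A k' l' * (L k k' * C l l'))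
      = ∑ q : n × n × n × n, A q.1 q.2.1 * A q.2.2.1 q.2.2.2 * (L q.1 q.2.2.1 * C q.2.1 q.2.2.2)
      from by simp [Fintype.sum_prod_type]]
  rw [show (∑ l, ∑ l', ∑ k', ∑ k, C l l' * (A k l' * (L k k' * A k' l)))
      = ∑ q : n × n × n × n, C q.1 q.2.1 * (A q.2.2.2 q.2.1 * (L q.2.2.2 q.2.2.1 * A q.2.2.1 q.1))
      from by simp [Fintype.sum_prod_type]]
  refine Fintype.sum_equiv ⟨fun q => (q.2.1, q.2.2.2, q.1, q.2.2.1),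
    fun q => (q.2.2.1, q.1, q.2.2.2, q.2.1), fun q => rfl, fun q => rfl⟩ _ _ ?_
  rintro ⟨k, l, k', l'⟩
  simp only [Equiv.coe_fn_mk]
  have hsy : L k' k = L k k' := congrFun (congrFun hLsym k) k'
  rw [hsy]
  ring

theorem stmt_12 (d M T t : ℕ) (hd : 1 ≤ d) (hM : 1 ≤ M) (hT : 1 ≤ T)
    (ht1 : 1 ≤ t) (htT : t ≤ T)
    (Ω : Type*) [MeasurableSpace Ω] (P : Measure Ω) [IsProbabilityMeasure P]
    (x : Fin T → Fin M → Ω → Fin d → ℝ) (y : Fin T → Fin M → Ω → ℝ)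
    (xq : Ω → Fin d → ℝ)
    (hxmeas : ∀ s i, Measurable (x s i)) (hymeas : ∀ s i, Measurable (y s i))
    (hxqmeas : Measurable xq)
    (hindep : iIndepFun (β := fun _ : (Fin T × Fin M) ⊕ Unit => (Fin d → ℝ) × ℝ)
        (Sum.elim (fun p ω => (x p.1 p.2 ω, y p.1 p.2 ω))
          (fun _ ω => (xq ω, (0 : ℝ)))) P)
    (hiid : ∀ s i j, IdentDistrib (fun ω => (x s i ω, y s i ω))
        (fun ω => (x s j ω, y s j ω)) P P)
    (h2 : ∀ s i k, MemLp (fun ω => x s i ω k * y s i ω) 2 P)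
    (hxq2 : ∀ k, MemLp (fun ω => xq ω k) 2 P)
    (hqmean : ∀ k, ∫ ω, xq ω k ∂P = 0)
    (Λ : Matrix (Fin d) (Fin d) ℝ) (hΛpd : Λ.PosDef) (hΛsym : Λ.IsSymm)
    (hΛ : ∀ k l, ∫ ω, xq ω k * xq ω l ∂P = Λ k l)
    (N : ℝ) (hN : 0 < N)
    (Γ : Matrix (Fin d) (Fin d) ℝ)
    (hΓ : Γ = (1 + 1 / N) • Λ + (Λ.trace / N) • (1 : Matrix (Fin d) (Fin d) ℝ))
    (μ : Fin T → Fin d → ℝ)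
    (hμ : ∀ s i, μ s = fun k => ∫ ω, x s i ω k * y s i ω ∂P)
    (Sig : Fin T → Matrix (Fin d) (Fin d) ℝ)
    (hSig : ∀ s i, Sig s = Matrix.of fun k l =>
        (∫ ω, (x s i ω k * y s i ω) * (x s i ω l * y s i ω) ∂P) - μ s k * μ s l)
    (S : Fin T → Ω → Fin d → ℝ) (hS : ∀ s ω, S s ω = ∑ i, y s i ω • x s i ω)
    (yhat Yhat : Ω → ℝ)
    (hyhat : ∀ ω, yhat ω = xq ω ⬝ᵥ (Γ⁻¹ *ᵥ ((1 / ((t : ℝ) * ((M : ℝ) + 1))) •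
        ∑ s ∈ Finset.univ.filter (fun s : Fin T => (s : ℕ) < t), S s ω)))
    (hYhat : ∀ ω, Yhat ω = xq ω ⬝ᵥ (Γ⁻¹ *ᵥ
        ((1 / ((T : ℝ) * ((M : ℝ) + 1) + 1)) • ∑ s, S s ω)))
    (c dd : ℝ)
    (hc : c = -((((T : ℝ) - t) * M + ((T : ℝ) + 1 - t))
        / ((t : ℝ) * ((M : ℝ) + 1) * ((T : ℝ) * ((M : ℝ) + 1) + 1))))
    (hdd : dd = 1 / ((T : ℝ) * ((M : ℝ) + 1) + 1))
    (αc : Fin T → ℝ) (hαc : ∀ i : Fin T, αc i = if (i : ℕ) < t then c else dd) :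
    ∫ ω, (Yhat ω - yhat ω) ^ 2 ∂P
      = ∑ i, (αc i) ^ 2 *
            (((M : ℝ) • Sig i + ((M : ℝ) ^ 2) • vecMulVec (μ i) (μ i))
              * (Γ⁻¹ * Γ⁻¹) * Λ).trace
        + (M : ℝ) ^ 2 * ∑ i, ∑ j ∈ Finset.univ.erase i,
            αc i * αc j * (vecMulVec (μ i) (μ j) * (Γ⁻¹ * Γ⁻¹) * Λ).trace := by
  classical
  set A := Γ⁻¹ with hAdef
  -- ## scalar facts
  have ht0 : ((t : ℝ)) ≠ 0 := Nat.cast_ne_zero.mpr (Nat.one_le_iff_ne_zero.mp ht1)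
  have hM1 : ((M : ℝ) + 1) ≠ 0 := by positivity
  have hTM1 : ((T : ℝ) * ((M : ℝ) + 1) + 1) ≠ 0 := by positivity
  have hcdd : c = dd - 1 / ((t : ℝ) * ((M : ℝ) + 1)) := by
    rw [hc, hdd]
    field_simp
    ring
  -- ## matrix facts
  have hΓsymm : Γᵀ = Γ := by
    rw [hΓ]
    simp [Matrix.transpose_add, Matrix.transpose_smul, hΛsym.eq]
  have hΓpd : Γ.PosDef := by
    refine Matrix.PosDef.of_dotProduct_mulVec_pos ?_ ?_
    · show Γᴴ = Γ
      rw [Matrix.conjTranspose_eq_transpose_of_trivial, hΓsymm]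
    · intro v hv
      have hΛv := hΛpd.dotProduct_mulVec_pos hv
      have hΛtr : 0 ≤ Λ.trace := by
        have : ∀ i, 0 < Λ i i := fun i => by
          have := hΛpd.dotProduct_mulVec_pos (x := Pi.single i 1) (by
            intro h
            have := congrFun h i
            simp at this)
          simpa [dotProduct, Matrix.mulVec, Pi.single_apply, Finset.sum_ite_eq,
            dotProduct] using this
        exact Finset.sum_nonneg fun i _ => (this i).le
      have hvv : 0 ≤ dotProduct (star v) v := by
        simp only [star_trivial, dotProduct]
        exact Finset.sum_nonneg fun i _ => mul_self_nonneg _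
      rw [hΓ]
      simp only [Matrix.add_mulVec, Matrix.smul_mulVec, Matrix.one_mulVec,
        dotProduct_add, dotProduct_smul, smul_eq_mul]
      have h1 : 0 < (1 + 1 / N) := by positivity
      have h2' : 0 ≤ Λ.trace / N * dotProduct (star v) v :=
        mul_nonneg (div_nonneg hΛtr hN.le) hvv
      nlinarith [hΛv]
  have hdet : IsUnit Γ.det := isUnit_iff_ne_zero.mpr (ne_of_gt hΓpd.det_pos)
  have hΓA : Γ * A = 1 := Matrix.mul_nonsing_inv Γ hdet
  have hAΓ : A * Γ = 1 := Matrix.nonsing_inv_mul Γ hdet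
  have hAsym : Aᵀ = A := by
    rw [hAdef, Matrix.transpose_nonsing_inv, hΓsymm]
  have hcommΓ : Γ * Λ = Λ * Γ := by
    rw [hΓ]
    simp [Matrix.add_mul, Matrix.mul_add, Matrix.smul_mul, Matrix.mul_smul]
  have hcommA : A * Λ = Λ * A := by
    calc A * Λ = A * Λ * (Γ * A) := by rw [hΓA, Matrix.mul_one]
      _ = A * (Λ * Γ) * A := by simp only [Matrix.mul_assoc]
      _ = A * (Γ * Λ) * A := by rw [hcommΓ]
      _ = (A * Γ) * (Λ * A) := by simp only [Matrix.mul_assoc]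
      _ = Λ * A := by rw [hAΓ, Matrix.one_mul]
  -- ## measurability
  set f : (Fin T × Fin M) ⊕ Unit → Ω → (Fin d → ℝ) × ℝ :=
    Sum.elim (fun p ω => (x p.1 p.2 ω, y p.1 p.2 ω)) (fun _ ω => (xq ω, (0 : ℝ))) with hfdef
  have hf_meas : ∀ i, Measurable (f i) := by
    rintro (⟨s, p⟩ | ⟨⟩)
    · exact (hxmeas s p).prodMk (hymeas s p)
    · exact hxqmeas.prodMk measurable_const
  -- ## second moments of the z's
  have hzz : ∀ (s s' : Fin T) (p p' : Fin M) (l l' : Fin d),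
      ∫ ω, (x s p ω l * y s p ω) * (x s' p' ω l' * y s' p' ω) ∂P
        = (if ((s, p) : Fin T × Fin M) = (s', p') then Sig s l l' + μ s l * μ s l'
            else μ s l * μ s' l') := by
    intro s s' p p' l l'
    by_cases h : ((s, p) : Fin T × Fin M) = (s', p')
    · rw [if_pos h]
      obtain ⟨rfl, rfl⟩ : s = s' ∧ p = p' := Prod.mk.inj h
      have h3 : Sig s l l'
          = (∫ ω, (x s p ω l * y s p ω) * (x s p ω l' * y s p ω) ∂P) - μ s l * μ s l' := by
        rw [hSig s p]; rfl
      rw [h3]; ring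
    · rw [if_neg h]
      have hne : (Sum.inl (s, p) : (Fin T × Fin M) ⊕ Unit) ≠ Sum.inl (s', p') := by
        simpa using h
      have hind := hindep.indepFun hne
      have hm1 : Measurable (fun w : (Fin d → ℝ) × ℝ => w.1 l * w.2) :=
        ((measurable_pi_apply l).comp measurable_fst).mul measurable_snd
      have hm2 : Measurable (fun w : (Fin d → ℝ) × ℝ => w.1 l' * w.2) :=
        ((measurable_pi_apply l').comp measurable_fst).mul measurable_snd
      have hind2 : IndepFun (fun ω => x s p ω l * y s p ω)
          (fun ω => x s' p' ω l' * y s' p' ω) P := hind.comp hm1 hm2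
      have hI := hind2.integral_fun_mul_eq_mul_integral
        ((h2 s p l).aestronglyMeasurable) ((h2 s' p' l').aestronglyMeasurable)
      have hμ1 : ∫ ω, x s p ω l * y s p ω ∂P = μ s l := by rw [hμ s p]
      have hμ2 : ∫ ω, x s' p' ω l' * y s' p' ω ∂P = μ s' l' := by rw [hμ s' p']
      calc ∫ ω, (x s p ω l * y s p ω) * (x s' p' ω l' * y s' p' ω) ∂P
          = (∫ ω, x s p ω l * y s p ω ∂P) * ∫ ω, x s' p' ω l' * y s' p' ω ∂P := hI
        _ = μ s l * μ s' l' := by rw [hμ1, hμ2]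
  -- ## base four-factor integrals
  have hbase : ∀ (s s' : Fin T) (p p' : Fin M) (k l k' l' : Fin d),
      Integrable (fun ω => (xq ω k * (x s p ω l * y s p ω))
          * (xq ω k' * (x s' p' ω l' * y s' p' ω))) P
      ∧ ∫ ω, (xq ω k * (x s p ω l * y s p ω)) * (xq ω k' * (x s' p' ω l' * y s' p' ω)) ∂P
          = Λ k k' * (if ((s, p) : Fin T × Fin M) = (s', p')
              then Sig s l l' + μ s l * μ s l' else μ s l * μ s' l') := by
    intro s s' p p' k l k' l'
    have h0 := hindep.indepFun_prodMk_prodMk hf_meas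
      (Sum.inr ()) (Sum.inr ()) (Sum.inl (s, p)) (Sum.inl (s', p'))
      (by simp) (by simp) (by simp) (by simp)
    have hg1 : Measurable (fun w : ((Fin d → ℝ) × ℝ) × ((Fin d → ℝ) × ℝ) =>
        w.1.1 k * w.2.1 k') :=
      ((measurable_pi_apply k).comp (measurable_fst.comp measurable_fst)).mul
        ((measurable_pi_apply k').comp (measurable_fst.comp measurable_snd))
    have hg2 : Measurable (fun w : ((Fin d → ℝ) × ℝ) × ((Fin d → ℝ) × ℝ) =>
        (w.1.1 l * w.1.2) * (w.2.1 l' * w.2.2)) := by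
      fun_prop
    have hXY : IndepFun (fun ω => xq ω k * xq ω k')
        (fun ω => (x s p ω l * y s p ω) * (x s' p' ω l' * y s' p' ω)) P :=
      h0.comp hg1 hg2
    have hXint : Integrable (fun ω => xq ω k * xq ω k') P :=
      l2_mul_integrable (hxq2 k) (hxq2 k')
    have hYint : Integrable (fun ω => (x s p ω l * y s p ω) * (x s' p' ω l' * y s' p' ω)) P :=
      l2_mul_integrable (h2 s p l) (h2 s' p' l')
    have hmul : Integrable (fun ω => (xq ω k * xq ω k')
        * ((x s p ω l * y s p ω) * (x s' p' ω l' * y s' p' ω))) P :=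
      hXY.integrable_mul hXint hYint
    constructor
    · refine hmul.congr (Filter.Eventually.of_forall fun ω => ?_)
      ring
    · have h5 : (fun ω => (xq ω k * (x s p ω l * y s p ω))
          * (xq ω k' * (x s' p' ω l' * y s' p' ω)))
          = fun ω => (xq ω k * xq ω k') * ((x s p ω l * y s p ω)
              * (x s' p' ω l' * y s' p' ω)) := funext fun ω => by ring
      rw [h5]
      have h6 := hXY.integral_fun_mul_eq_mul_integral hXint.aestronglyMeasurable hYint.aestronglyMeasurable
      calc ∫ ω, (xq ω k * xq ω k') * ((x s p ω l * y s p ω)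
              * (x s' p' ω l' * y s' p' ω)) ∂P
          = (∫ ω, xq ω k * xq ω k' ∂P)
              * ∫ ω, (x s p ω l * y s p ω) * (x s' p' ω l' * y s' p' ω) ∂P := h6
        _ = _ := by rw [hΛ k k', hzz s s' p p' l l']
  -- ## the prediction difference as a double sum
  have hSl : ∀ (s : Fin T) (ω : Ω) (l : Fin d), S s ω l = ∑ p, x s p ω l * y s p ω := by
    intro s ω l
    rw [hS s ω]
    simp [Finset.sum_apply, mul_comm]
  have hsplitsum : ∀ u : Fin T → ℝ,
      (1 / ((T : ℝ) * ((M : ℝ) + 1) + 1)) * ∑ s, u s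
        - (1 / ((t : ℝ) * ((M : ℝ) + 1)))
            * ∑ s ∈ Finset.univ.filter (fun s : Fin T => (s : ℕ) < t), u s
      = ∑ s, αc s * u s := by
    intro u
    have hp := Finset.sum_filter_add_sum_filter_not Finset.univ (fun s : Fin T => (s : ℕ) < t) u
    have hsum : ∑ s, αc s * u s
        = ∑ s ∈ Finset.univ.filter (fun s : Fin T => (s : ℕ) < t), c * u s
          + ∑ s ∈ Finset.univ.filter (fun s : Fin T => ¬ (s : ℕ) < t), dd * u s := by
      rw [← Finset.sum_filter_add_sum_filter_not Finset.univ (fun s : Fin T => (s : ℕ) < t)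
        (fun s => αc s * u s)]
      congr 1
      · exact Finset.sum_congr rfl fun s hs => by rw [hαc, if_pos (Finset.mem_filter.mp hs).2]
      · exact Finset.sum_congr rfl fun s hs => by rw [hαc, if_neg (Finset.mem_filter.mp hs).2]
    rw [hsum, ← Finset.mul_sum, ← Finset.mul_sum, ← hp, hcdd, hdd]
    ring
  have hD1 : ∀ ω, Yhat ω - yhat ω
      = ∑ k, xq ω k * ∑ l, A k l * ∑ s, αc s * ∑ p, x s p ω l * y s p ω := by
    intro ω
    rw [hYhat ω, hyhat ω]
    simp only [dotProduct, Matrix.mulVec, Pi.smul_apply, Finset.sum_apply,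
      smul_eq_mul, hSl]
    rw [← Finset.sum_sub_distrib]
    refine Finset.sum_congr rfl fun k _ => ?_
    rw [← mul_sub]
    congr 1
    rw [← Finset.sum_sub_distrib]
    refine Finset.sum_congr rfl fun l _ => ?_
    rw [← mul_sub]
    congr 1
    exact hsplitsum fun s => ∑ p, x s p ω l * y s p ω
  have hD : ∀ ω, Yhat ω - yhat ω
      = ∑ u : Fin T × Fin M, ∑ v : Fin d × Fin d,
          (A v.1 v.2 * αc u.1) * (xq ω v.1 * (x u.1 u.2 ω v.2 * y u.1 u.2 ω)) := by
    intro ω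
    rw [hD1 ω]
    simp only [Finset.mul_sum]
    rw [sum_swap4 (f := fun k l s p => xq ω k * (A k l * (αc s * (x s p ω l * y s p ω))))]
    rw [show (∑ u : Fin T × Fin M, ∑ v : Fin d × Fin d,
        (A v.1 v.2 * αc u.1) * (xq ω v.1 * (x u.1 u.2 ω v.2 * y u.1 u.2 ω)))
      = ∑ s, ∑ p, ∑ k, ∑ l, (A k l * αc s) * (xq ω k * (x s p ω l * y s p ω))
      from by simp only [Fintype.sum_prod_type]]
    exact Finset.sum_congr rfl fun s _ => Finset.sum_congr rfl fun p _ =>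
      Finset.sum_congr rfl fun k _ => Finset.sum_congr rfl fun l _ => by ring
  -- ## integrability of elementary products
  have hprodint : ∀ (u u' : Fin T × Fin M) (v v' : Fin d × Fin d),
      Integrable (fun ω =>
        ((A v.1 v.2 * αc u.1) * (xq ω v.1 * (x u.1 u.2 ω v.2 * y u.1 u.2 ω)))
        * ((A v'.1 v'.2 * αc u'.1) * (xq ω v'.1 * (x u'.1 u'.2 ω v'.2 * y u'.1 u'.2 ω)))) P := by
    intro u u' v v'
    have h0 := ((hbase u.1 u'.1 u.2 u'.2 v.1 v.2 v'.1 v'.2).1.const_mul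
      ((A v.1 v.2 * αc u.1) * (A v'.1 v'.2 * αc u'.1)))
    refine h0.congr (Filter.Eventually.of_forall fun ω => ?_)
    ring
  -- ## value of elementary integrals
  have hterm : ∀ (u u' : Fin T × Fin M) (v v' : Fin d × Fin d),
      ∫ ω, ((A v.1 v.2 * αc u.1) * (xq ω v.1 * (x u.1 u.2 ω v.2 * y u.1 u.2 ω)))
          * ((A v'.1 v'.2 * αc u'.1) * (xq ω v'.1 * (x u'.1 u'.2 ω v'.2 * y u'.1 u'.2 ω))) ∂P
        = (A v.1 v.2 * αc u.1) * (A v'.1 v'.2 * αc u'.1)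
            * (Λ v.1 v'.1 * (if u = u' then Sig u.1 v.2 v'.2 + μ u.1 v.2 * μ u.1 v'.2
                else μ u.1 v.2 * μ u'.1 v'.2)) := by
    intro u u' v v'
    have e2 : (fun ω => ((A v.1 v.2 * αc u.1) * (xq ω v.1 * (x u.1 u.2 ω v.2 * y u.1 u.2 ω)))
          * ((A v'.1 v'.2 * αc u'.1) * (xq ω v'.1 * (x u'.1 u'.2 ω v'.2 * y u'.1 u'.2 ω))))
        = fun ω => ((A v.1 v.2 * αc u.1) * (A v'.1 v'.2 * αc u'.1))
            * ((xq ω v.1 * (x u.1 u.2 ω v.2 * y u.1 u.2 ω))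
                * (xq ω v'.1 * (x u'.1 u'.2 ω v'.2 * y u'.1 u'.2 ω))) := funext fun ω => by ring
    rw [e2, integral_const_mul _ _, (hbase u.1 u'.1 u.2 u'.2 v.1 v.2 v'.1 v'.2).2]
  -- ## integral of H u * H u'
  have hHHint : ∀ u u' : Fin T × Fin M,
      Integrable (fun ω =>
        (∑ v : Fin d × Fin d,
          (A v.1 v.2 * αc u.1) * (xq ω v.1 * (x u.1 u.2 ω v.2 * y u.1 u.2 ω)))
        * (∑ v' : Fin d × Fin d,
          (A v'.1 v'.2 * αc u'.1) * (xq ω v'.1 * (x u'.1 u'.2 ω v'.2 * y u'.1 u'.2 ω)))) P := by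
    intro u u'
    have e1 : (fun ω =>
        (∑ v : Fin d × Fin d,
          (A v.1 v.2 * αc u.1) * (xq ω v.1 * (x u.1 u.2 ω v.2 * y u.1 u.2 ω)))
        * (∑ v' : Fin d × Fin d,
          (A v'.1 v'.2 * αc u'.1) * (xq ω v'.1 * (x u'.1 u'.2 ω v'.2 * y u'.1 u'.2 ω))))
        = fun ω => ∑ v : Fin d × Fin d, ∑ v' : Fin d × Fin d,
            ((A v.1 v.2 * αc u.1) * (xq ω v.1 * (x u.1 u.2 ω v.2 * y u.1 u.2 ω)))
            * ((A v'.1 v'.2 * αc u'.1) * (xq ω v'.1 * (x u'.1 u'.2 ω v'.2 * y u'.1 u'.2 ω))) :=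
      funext fun ω => Finset.sum_mul_sum _ _ _ _
    rw [e1]
    exact integrable_finset_sum _ fun v _ => integrable_finset_sum _ fun v' _ =>
      hprodint u u' v v'
  have hHH : ∀ u u' : Fin T × Fin M,
      ∫ ω, (∑ v : Fin d × Fin d,
          (A v.1 v.2 * αc u.1) * (xq ω v.1 * (x u.1 u.2 ω v.2 * y u.1 u.2 ω)))
        * (∑ v' : Fin d × Fin d,
          (A v'.1 v'.2 * αc u'.1) * (xq ω v'.1 * (x u'.1 u'.2 ω v'.2 * y u'.1 u'.2 ω))) ∂P
      = αc u.1 * αc u'.1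
          * (((if u = u' then Sig u.1 + vecMulVec (μ u.1) (μ u.1)
              else vecMulVec (μ u.1) (μ u'.1)) * (A * A) * Λ).trace) := by
    intro u u'
    have e1 : ∀ ω,
        (∑ v : Fin d × Fin d,
          (A v.1 v.2 * αc u.1) * (xq ω v.1 * (x u.1 u.2 ω v.2 * y u.1 u.2 ω)))
        * (∑ v' : Fin d × Fin d,
          (A v'.1 v'.2 * αc u'.1) * (xq ω v'.1 * (x u'.1 u'.2 ω v'.2 * y u'.1 u'.2 ω)))
        = ∑ v : Fin d × Fin d, ∑ v' : Fin d × Fin d,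
            ((A v.1 v.2 * αc u.1) * (xq ω v.1 * (x u.1 u.2 ω v.2 * y u.1 u.2 ω)))
            * ((A v'.1 v'.2 * αc u'.1) * (xq ω v'.1 * (x u'.1 u'.2 ω v'.2 * y u'.1 u'.2 ω))) :=
      fun ω => Finset.sum_mul_sum _ _ _ _
    rw [integral_congr_ae (Filter.Eventually.of_forall e1)]
    rw [integral_finset_sum _ fun v _ => integrable_finset_sum _ fun v' _ =>
      hprodint u u' v v']
    rw [Finset.sum_congr rfl fun v (_ : v ∈ Finset.univ) =>
      integral_finset_sum _ fun v' _ => hprodint u u' v v']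
    rw [Finset.sum_congr rfl fun v (_ : v ∈ Finset.univ) =>
      Finset.sum_congr rfl fun v' (_ : v' ∈ Finset.univ) => hterm u u' v v']
    -- now a purely algebraic identity
    rw [← trace_form A Λ _ hΛsym hAsym hcommA]
    rw [show (∑ v : Fin d × Fin d, ∑ v' : Fin d × Fin d,
        (A v.1 v.2 * αc u.1) * (A v'.1 v'.2 * αc u'.1)
          * (Λ v.1 v'.1 * (if u = u' then Sig u.1 v.2 v'.2 + μ u.1 v.2 * μ u.1 v'.2
              else μ u.1 v.2 * μ u'.1 v'.2)))
      = ∑ k, ∑ l, ∑ k', ∑ l', (A k l * αc u.1) * (A k' l' * αc u'.1)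
          * (Λ k k' * (if u = u' then Sig u.1 l l' + μ u.1 l * μ u.1 l'
              else μ u.1 l * μ u'.1 l'))
      from by simp only [Fintype.sum_prod_type]]
    simp only [Finset.mul_sum]
    refine Finset.sum_congr rfl fun k _ => Finset.sum_congr rfl fun l _ =>
      Finset.sum_congr rfl fun k' _ => Finset.sum_congr rfl fun l' _ => ?_
    by_cases h : u = u'
    · simp only [if_pos h, Matrix.add_apply, Matrix.vecMulVec_apply]
      ring
    · simp only [if_neg h, Matrix.vecMulVec_apply]
      ring
  -- ## put the integral together
  have hmain : ∫ ω, (Yhat ω - yhat ω) ^ 2 ∂P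
      = ∑ u : Fin T × Fin M, ∑ u' : Fin T × Fin M, αc u.1 * αc u'.1
          * (((if u = u' then Sig u.1 + vecMulVec (μ u.1) (μ u.1)
              else vecMulVec (μ u.1) (μ u'.1)) * (A * A) * Λ).trace) := by
    have e0 : ∀ ω, (Yhat ω - yhat ω) ^ 2
        = ∑ u : Fin T × Fin M,
            ((∑ v : Fin d × Fin d,
              (A v.1 v.2 * αc u.1) * (xq ω v.1 * (x u.1 u.2 ω v.2 * y u.1 u.2 ω)))
            * ∑ u' : Fin T × Fin M, ∑ v' : Fin d × Fin d,
              (A v'.1 v'.2 * αc u'.1) * (xq ω v'.1 * (x u'.1 u'.2 ω v'.2 * y u'.1 u'.2 ω))) := by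
      intro ω
      rw [sq, hD ω, Finset.sum_mul]
    rw [integral_congr_ae (Filter.Eventually.of_forall e0)]
    rw [integral_finset_sum _ fun u _ => ?_]
    · refine Finset.sum_congr rfl fun u _ => ?_
      have e2 : ∀ ω, (∑ v : Fin d × Fin d,
            (A v.1 v.2 * αc u.1) * (xq ω v.1 * (x u.1 u.2 ω v.2 * y u.1 u.2 ω)))
          * ∑ u' : Fin T × Fin M, ∑ v' : Fin d × Fin d,
            (A v'.1 v'.2 * αc u'.1) * (xq ω v'.1 * (x u'.1 u'.2 ω v'.2 * y u'.1 u'.2 ω))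
          = ∑ u' : Fin T × Fin M,
              (∑ v : Fin d × Fin d,
                (A v.1 v.2 * αc u.1) * (xq ω v.1 * (x u.1 u.2 ω v.2 * y u.1 u.2 ω)))
              * ∑ v' : Fin d × Fin d,
                (A v'.1 v'.2 * αc u'.1) * (xq ω v'.1 * (x u'.1 u'.2 ω v'.2 * y u'.1 u'.2 ω)) :=
        fun ω => Finset.mul_sum _ _ _
      rw [integral_congr_ae (Filter.Eventually.of_forall e2)]
      rw [integral_finset_sum _ fun u' _ => hHHint u u']
      exact Finset.sum_congr rfl fun u' _ => hHH u u'
    · have e2 : (fun ω => (∑ v : Fin d × Fin d,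
            (A v.1 v.2 * αc u.1) * (xq ω v.1 * (x u.1 u.2 ω v.2 * y u.1 u.2 ω)))
          * ∑ u' : Fin T × Fin M, ∑ v' : Fin d × Fin d,
            (A v'.1 v'.2 * αc u'.1) * (xq ω v'.1 * (x u'.1 u'.2 ω v'.2 * y u'.1 u'.2 ω)))
          = fun ω => ∑ u' : Fin T × Fin M,
              (∑ v : Fin d × Fin d,
                (A v.1 v.2 * αc u.1) * (xq ω v.1 * (x u.1 u.2 ω v.2 * y u.1 u.2 ω)))
              * ∑ v' : Fin d × Fin d,
                (A v'.1 v'.2 * αc u'.1) * (xq ω v'.1 * (x u'.1 u'.2 ω v'.2 * y u'.1 u'.2 ω)) :=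
        funext fun ω => Finset.mul_sum _ _ _
      rw [e2]
      exact integrable_finset_sum _ fun u' _ => hHHint u u'
  -- ## final combinatorics
  rw [hmain]
  set TV : Fin T → Fin T → ℝ := fun a b => (vecMulVec (μ a) (μ b) * (A * A) * Λ).trace with hTVdef
  set TS : Fin T → ℝ := fun a => (Sig a * (A * A) * Λ).trace with hTSdef
  have hTV : ∀ a b, (vecMulVec (μ a) (μ b) * (A * A) * Λ).trace = TV a b := fun a b => rfl
  have hTS : ∀ a, (Sig a * (A * A) * Λ).trace = TS a := fun a => rfl
  have htr1 : ∀ s : Fin T,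
      (((M : ℝ) • Sig s + ((M : ℝ) ^ 2) • vecMulVec (μ s) (μ s)) * (A * A) * Λ).trace
        = (M : ℝ) * TS s + (M : ℝ) ^ 2 * TV s s := by
    intro s
    rw [Matrix.add_mul, Matrix.add_mul, Matrix.trace_add, Matrix.smul_mul, Matrix.smul_mul,
      Matrix.smul_mul, Matrix.smul_mul, Matrix.trace_smul, Matrix.trace_smul]
    simp [smul_eq_mul, hTV, hTS]
  have hcollapse : ∀ g : Fin T → ℝ, ∑ u : Fin T × Fin M, g u.1 = (M : ℝ) * ∑ s, g s := by
    intro g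
    rw [Fintype.sum_prod_type]
    simp [Finset.sum_const, Finset.card_univ, Finset.mul_sum, nsmul_eq_mul]
  have herase : ∀ s : Fin T, ∑ j ∈ Finset.univ.erase s, αc s * αc j * TV s j
      = (∑ j, αc s * αc j * TV s j) - αc s * αc s * TV s s := by
    intro s
    have h : ∑ j ∈ Finset.univ.erase s, αc s * αc j * TV s j + αc s * αc s * TV s s
        = ∑ j, αc s * αc j * TV s j := Finset.sum_erase_add _ _ (Finset.mem_univ s)
    linarith
  have hstepA : (∑ u : Fin T × Fin M, ∑ u' : Fin T × Fin M, αc u.1 * αc u'.1 *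
        (((if u = u' then Sig u.1 + vecMulVec (μ u.1) (μ u.1)
            else vecMulVec (μ u.1) (μ u'.1)) * (A * A) * Λ).trace))
      = ∑ u : Fin T × Fin M, ∑ u' : Fin T × Fin M,
          (αc u.1 * αc u'.1 * TV u.1 u'.1
            + (if u = u' then αc u'.1 * αc u'.1 * TS u'.1 else 0)) := by
    refine Finset.sum_congr rfl fun u _ => Finset.sum_congr rfl fun u' _ => ?_
    by_cases h : u = u'
    · subst h
      rw [if_pos rfl, if_pos rfl, Matrix.add_mul, Matrix.add_mul, Matrix.trace_add]
      simp only [hTV, hTS]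
      ring
    · rw [if_neg h, if_neg h, add_zero, hTV]
  rw [hstepA]
  have hstepB : (∑ u : Fin T × Fin M, ∑ u' : Fin T × Fin M,
        (αc u.1 * αc u'.1 * TV u.1 u'.1
          + (if u = u' then αc u'.1 * αc u'.1 * TS u'.1 else 0)))
      = ∑ u : Fin T × Fin M, ((∑ u' : Fin T × Fin M, αc u.1 * αc u'.1 * TV u.1 u'.1)
          + αc u.1 * αc u.1 * TS u.1) := by
    refine Finset.sum_congr rfl fun u _ => ?_
    rw [Finset.sum_add_distrib, Finset.sum_ite_eq]
    simp
  rw [hstepB, Finset.sum_add_distrib]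
  have hcol2 : ∀ u : Fin T × Fin M,
      (∑ u' : Fin T × Fin M, αc u.1 * αc u'.1 * TV u.1 u'.1)
        = (M : ℝ) * ∑ s', αc u.1 * αc s' * TV u.1 s' := fun u => hcollapse (fun b => αc u.1 * αc b * TV u.1 b)
  rw [Finset.sum_congr rfl fun u (_ : u ∈ Finset.univ) => hcol2 u,
    hcollapse (fun s => (M : ℝ) * ∑ s', αc s * αc s' * TV s s'),
    hcollapse (fun s => αc s * αc s * TS s)]
  simp only [hTV, htr1, herase]
  have hX3 : ∑ s : Fin T, ((M : ℝ) * ∑ s', αc s * αc s' * TV s s')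
      = (M : ℝ) * ∑ s, ∑ s', αc s * αc s' * TV s s' := (Finset.mul_sum _ _ _).symm
  have h1 : ∑ s : Fin T, αc s ^ 2 * ((M : ℝ) * TS s + (M : ℝ) ^ 2 * TV s s)
      = (M : ℝ) * ∑ s, αc s * αc s * TS s + (M : ℝ) ^ 2 * ∑ s, αc s * αc s * TV s s := by
    rw [Finset.mul_sum, Finset.mul_sum, ← Finset.sum_add_distrib]
    exact Finset.sum_congr rfl fun s _ => by ring
  have h2 : ∑ s : Fin T, ((∑ s', αc s * αc s' * TV s s') - αc s * αc s * TV s s)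
      = (∑ s, ∑ s', αc s * αc s' * TV s s') - ∑ s, αc s * αc s * TV s s :=
    Finset.sum_sub_distrib _ _
  rw [hX3, h1, h2]
  ring
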